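/- For β > 0, the scale function W defined by W(x) = (1/β) · Σ_{k=0}^{⌊x⌋} ((-1)^k / k!) · ((x-k)/β)^k · exp((x-k)/β) satisfies, on each open interval (n, n+1) with n ∈ ℕ, the delayed differential equation β·W'(x) = W(x) - W(x-1) for x > 1, where on (0,1) it satisfies β·W'(x) = W(x). -/

import Mathlib

open Real

/-- The scale function `W` arising in the ARL computation for the CUSUM procedure. -/
noncomputable def scaleW (β x : ℝ) : ℝ :=
  (1 / β) * ∑ k ∈ Finset.range (⌊x⌋₊ + 1),
    ((-1 : ℝ) ^ k / (Nat.factorial k)) * ((x - k) / β) ^ k * Real.exp ((x - k) / β)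

noncomputable def Wfun (β : ℝ) (n : ℕ) (x : ℝ) : ℝ :=
  (1 / β) * ∑ k ∈ Finset.range (n + 1),
    ((-1 : ℝ) ^ k / (Nat.factorial k)) * ((x - k) / β) ^ k * Real.exp ((x - k) / β)

lemma scaleW_eq_Wfun (β x : ℝ) : scaleW β x = Wfun β ⌊x⌋₊ x := rfl

lemma hasDerivAt_Wfun (β : ℝ) (hβ : β ≠ 0) (n : ℕ) (x : ℝ) :
    HasDerivAt (Wfun β n)
      ((1 / β) * ∑ k ∈ Finset.range (n + 1),
        ((-1 : ℝ) ^ k / (Nat.factorial k)) *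
          ((((k : ℝ) * ((x - k) / β) ^ (k - 1) + ((x - k) / β) ^ k) * (1 / β)) *
            Real.exp ((x - k) / β))) x := by
  apply HasDerivAt.const_mul
  apply HasDerivAt.fun_sum
  intro k _
  have hu : HasDerivAt (fun y : ℝ => (y - (k : ℝ)) / β) (1 / β) x := by
    simpa using ((hasDerivAt_id x).sub_const (k : ℝ)).div_const β
  have hp := hu.fun_pow k
  have he := hu.exp
  have := (hp.const_mul ((-1 : ℝ) ^ k / (Nat.factorial k))).fun_mul he
  refine this.congr_deriv ?_
  ring

lemma floor_eq_of_Ioo {n : ℕ} {y : ℝ} (hy : y ∈ Set.Ioo (n : ℝ) (n + 1)) : ⌊y⌋₊ = n := by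
  have h0 : (0 : ℝ) ≤ y := le_trans (n.cast_nonneg) hy.1.le
  exact (Nat.floor_eq_iff h0).2 ⟨hy.1.le, hy.2⟩

lemma hasDerivAt_scaleW (β : ℝ) (hβ : β ≠ 0) (n : ℕ) (x : ℝ)
    (hx : x ∈ Set.Ioo (n : ℝ) (n + 1)) :
    HasDerivAt (scaleW β)
      ((1 / β) * ∑ k ∈ Finset.range (n + 1),
        ((-1 : ℝ) ^ k / (Nat.factorial k)) *
          ((((k : ℝ) * ((x - k) / β) ^ (k - 1) + ((x - k) / β) ^ k) * (1 / β)) *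
            Real.exp ((x - k) / β))) x := by
  apply (hasDerivAt_Wfun β hβ n x).congr_of_eventuallyEq
  have hmem : Set.Ioo (n : ℝ) (n + 1) ∈ nhds x := (isOpen_Ioo).mem_nhds hx
  filter_upwards [hmem] with y hy
  rw [scaleW_eq_Wfun, floor_eq_of_Ioo hy]

theorem scaleW_dde (β : ℝ) (hβ : 0 < β) :
    (∀ x ∈ Set.Ioo (0:ℝ) 1,
        ∃ d : ℝ, HasDerivAt (scaleW β) d x ∧ β * d = scaleW β x) ∧
    (∀ n : ℕ, 1 ≤ n → ∀ x ∈ Set.Ioo (n : ℝ) (n + 1),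
        ∃ d : ℝ, HasDerivAt (scaleW β) d x ∧
          β * d = scaleW β x - scaleW β (x - 1)) := by
  have hβ' : β ≠ 0 := ne_of_gt hβ
  constructor
  · intro x hx
    have hx0 : x ∈ Set.Ioo ((0 : ℕ) : ℝ) ((0 : ℕ) + 1) := by simpa using hx
    refine ⟨_, hasDerivAt_scaleW β hβ' 0 x hx0, ?_⟩
    rw [scaleW_eq_Wfun, floor_eq_of_Ioo hx0, Wfun]
    simp only [zero_add, Finset.sum_range_one, Nat.cast_zero, sub_zero, pow_zero,
      Nat.factorial_zero, Nat.cast_one]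
    field_simp
    ring
  · intro n hn x hx
    refine ⟨_, hasDerivAt_scaleW β hβ' n x hx, ?_⟩
    have hfx : ⌊x⌋₊ = n := floor_eq_of_Ioo hx
    have hx1 : x - 1 ∈ Set.Ioo ((n - 1 : ℕ) : ℝ) ((n - 1 : ℕ) + 1) := by
      have h1 : ((n - 1 : ℕ) : ℝ) = (n : ℝ) - 1 := by
        have : (1 : ℕ) ≤ n := hn
        push_cast [Nat.cast_sub this]; ring
      constructor
      · rw [h1]; linarith [hx.1]
      · rw [h1]; linarith [hx.2]
    have hfx1 : ⌊x - 1⌋₊ = n - 1 := floor_eq_of_Ioo hx1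
    rw [scaleW_eq_Wfun, scaleW_eq_Wfun, hfx, hfx1]
    -- now pure algebra on Wfun
    have key : β * ((1 / β) * ∑ k ∈ Finset.range (n + 1),
        ((-1 : ℝ) ^ k / (Nat.factorial k)) *
          ((((k : ℝ) * ((x - k) / β) ^ (k - 1) + ((x - k) / β) ^ k) * (1 / β)) *
            Real.exp ((x - k) / β)))
        = (∑ k ∈ Finset.range (n + 1),
            ((-1 : ℝ) ^ k / (Nat.factorial k)) * ((x - k) / β) ^ k *
              Real.exp ((x - k) / β) * (1 / β))
          + (∑ k ∈ Finset.range (n + 1),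
            ((-1 : ℝ) ^ k / (Nat.factorial k)) * ((k : ℝ) * ((x - k) / β) ^ (k - 1)) *
              Real.exp ((x - k) / β) * (1 / β)) := by
      rw [← Finset.sum_add_distrib, ← mul_assoc, mul_one_div_cancel hβ', one_mul]
      apply Finset.sum_congr rfl
      intro k _
      ring
    rw [key]
    have hA : (∑ k ∈ Finset.range (n + 1),
        ((-1 : ℝ) ^ k / (Nat.factorial k)) * ((x - k) / β) ^ k *
          Real.exp ((x - k) / β) * (1 / β)) = Wfun β n x := by
      rw [Wfun, Finset.mul_sum]
      apply Finset.sum_congr rfl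
      intro k _
      ring
    have hB : (∑ k ∈ Finset.range (n + 1),
        ((-1 : ℝ) ^ k / (Nat.factorial k)) * ((k : ℝ) * ((x - k) / β) ^ (k - 1)) *
          Real.exp ((x - k) / β) * (1 / β)) = -Wfun β (n - 1) (x - 1) := by
      rw [Finset.sum_range_succ']
      have h0 : ((-1 : ℝ) ^ 0 / (Nat.factorial 0)) * (((0 : ℕ) : ℝ) * ((x - (0:ℕ)) / β) ^ (0 - 1)) *
          Real.exp ((x - (0:ℕ)) / β) * (1 / β) = 0 := by
        simp
      rw [h0, add_zero]
      have hrange : n - 1 + 1 = n := Nat.succ_pred_eq_of_pos hn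
      rw [Wfun, hrange, Finset.mul_sum, ← Finset.sum_neg_distrib]
      apply Finset.sum_congr rfl
      intro i _
      have hcast : (x - ((i + 1 : ℕ) : ℝ)) = (x - 1 - (i : ℝ)) := by push_cast; ring
      have hfact : ((Nat.factorial (i + 1) : ℝ)) = (i + 1) * (Nat.factorial i) := by
        rw [Nat.factorial_succ]; push_cast; ring
      have hfi : ((Nat.factorial i : ℝ)) ≠ 0 := by positivity
      rw [hcast]
      simp only [Nat.add_sub_cancel, pow_succ]
      push_cast [hfact]
      field_simp
    rw [hA, hB]
    ring
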